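/- Let A, B, C be three affinely independent points in the Euclidean plane ℝ² such that dist(A,B) = c√3, dist(B,C) = a√3, dist(C,A) = b√3 for positive integers a, b, c, such that the area of the triangle ABC (the Lebesgue measure of the convex hull of {A, B, C}) equals n√3/4 for some positive integer n, and such that the perimeter dist(A,B) + dist(B,C) + dist(C,A) exceeds the area. Then the multiset {a, b, c} is one of: {3, 3, 3}; {x, x, 1} for some positive integers x, y with 4x² − 3y² = 1; {x, x, 2} for some positive integers x, y with x² − 3y² = 1; or {3x+1, 3x−1, 3} for some positive integers x, y with 4x² − 15y² = 1. -/

import Mathlib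

open MeasureTheory Set

noncomputable abbrev E2 := EuclideanSpace ℝ (Fin 2)
noncomputable def bE : Module.Basis (Fin 2) ℝ E2 := (EuclideanSpace.basisFun (Fin 2) ℝ).toBasis

lemma bE_apply (i j : Fin 2) : (bE i) j = if i = j then 1 else 0 := by
  simp [bE, EuclideanSpace.basisFun_apply, EuclideanSpace.single_apply, eq_comm]

lemma bE_coord (i : Fin 2) (x : E2) : bE.repr x i = x i := by
  simp [bE, EuclideanSpace.basisFun_repr]

lemma line_null (g : E2 →ₗ[ℝ] ℝ) (hg : g ≠ 0) (r : ℝ) : volume {x : E2 | g x = r} = 0 := by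
  obtain ⟨x₀, hx₀⟩ : ∃ x, g x ≠ 0 := by
    by_contra h; push_neg at h; exact hg (LinearMap.ext fun x => by simp [h x])
  set p : E2 := (r / g x₀) • x₀ with hp
  have hgp : g p = r := by
    simp [hp, _root_.map_smul, smul_eq_mul, div_mul_cancel₀ _ hx₀]
  have himg : {x : E2 | g x = r} = (fun x => -p + x) ⁻¹' (LinearMap.ker g : Set E2) := by
    ext x
    simp only [Set.mem_preimage, SetLike.mem_coe, LinearMap.mem_ker, Set.mem_setOf_eq,
      map_add, map_neg, hgp]
    constructor
    · intro hx; simp [hx]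
    · intro h; linarith
  rw [himg, measure_preimage_add]
  exact Measure.addHaar_submodule volume _ (by
    intro h
    rw [LinearMap.ker_eq_top] at h
    exact hx₀ (by simp [h]))

def Topen : Set E2 := {x | 0 < x 0 ∧ 0 < x 1 ∧ x 0 + x 1 < 1}
def Tclosed : Set E2 := {x | 0 ≤ x 0 ∧ 0 ≤ x 1 ∧ x 0 + x 1 ≤ 1}

lemma stdtri_region : volume (regionBetween (fun _ => (0:ℝ)) (fun x => 1 - x) (Set.Ioo 0 1)) = ENNReal.ofReal (1/2) := by
  rw [Measure.volume_eq_prod]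
  have hint : IntegrableOn (fun x : ℝ => 1 - x) (Ioo 0 1) volume :=
    ((continuous_const.sub continuous_id).continuousOn).integrableOn_compact isCompact_Icc
      |>.mono_set Ioo_subset_Icc_self
  rw [volume_regionBetween_eq_integral (integrableOn_const measure_Ioo_lt_top.ne)
    hint measurableSet_Ioo (fun x hx => by simp only [mem_Ioo] at hx; simp; linarith [hx.2])]
  congr 1
  simp only [Pi.sub_apply, sub_zero]
  rw [← integral_Ioc_eq_integral_Ioo, ← intervalIntegral.integral_of_le (by norm_num : (0:ℝ) ≤ 1)]
  rw [intervalIntegral.integral_sub intervalIntegrable_const intervalIntegral.intervalIntegrable_id]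
  simp [integral_id]
  norm_num

lemma topen_vol : volume Topen = ENNReal.ofReal (1/2) := by
  have hφ := (MeasureTheory.volume_preserving_finTwoArrow ℝ).comp
    (PiLp.volume_preserving_ofLp (Fin 2))
  have happ : ∀ (x : E2) (i : Fin 2), (@WithLp.ofLp 2 (Fin 2 → ℝ)) x i = x i :=
    fun _ _ => rfl
  have hpre : Topen = (⇑(MeasurableEquiv.finTwoArrow) ∘ (@WithLp.ofLp 2 (Fin 2 → ℝ))) ⁻¹'
      (regionBetween (fun _ => (0:ℝ)) (fun x => 1 - x) (Set.Ioo 0 1)) := by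
    ext x
    simp only [Topen, Set.mem_setOf_eq, Set.mem_preimage, Function.comp_apply,
      regionBetween, mem_Ioo, MeasurableEquiv.finTwoArrow_apply, Set.mem_setOf_eq, happ]
    constructor
    · rintro ⟨h1, h2, h3⟩; exact ⟨⟨h1, by linarith⟩, h2, by linarith⟩
    · rintro ⟨⟨h1, h2⟩, h3, h4⟩; exact ⟨h1, h3, by linarith⟩
  rw [hpre, hφ.measure_preimage]
  · exact stdtri_region
  · exact (measurableSet_regionBetween measurable_const
      (continuous_const.sub continuous_id).measurable measurableSet_Ioo).nullMeasurableSet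

lemma coord_ne_zero (i : Fin 2) : (bE.coord i : E2 →ₗ[ℝ] ℝ) ≠ 0 := by
  intro h
  have h2 : bE.coord i (bE i) = bE.repr (bE i) i := rfl
  rw [h] at h2
  rw [bE_coord, bE_apply] at h2
  simp at h2

lemma sum_coord_ne_zero : (bE.coord 0 + bE.coord 1 : E2 →ₗ[ℝ] ℝ) ≠ 0 := by
  intro h
  have h2 : (bE.coord 0 + bE.coord 1 : E2 →ₗ[ℝ] ℝ) (bE 0) = 0 := by rw [h]; rfl
  have h3 : bE.coord 0 (bE 0) + bE.coord 1 (bE 0) = 0 := h2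
  have c0 : bE.coord 0 (bE 0) = (1:ℝ) := by
    show bE.repr (bE 0) 0 = 1
    rw [bE_coord, bE_apply]; simp
  have c1 : bE.coord 1 (bE 0) = (0:ℝ) := by
    show bE.repr (bE 0) 1 = 0
    rw [bE_coord, bE_apply]; simp
  rw [c0, c1] at h3
  linarith

lemma tclosed_vol : volume Tclosed = ENNReal.ofReal (1/2) := by
  have h0 : volume {x : E2 | x 0 = 0} = 0 := by
    have h := line_null (bE.coord 0) (coord_ne_zero 0) 0
    have : {x : E2 | (bE.coord 0) x = 0} = {x : E2 | x 0 = 0} := by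
      ext x; constructor <;> intro hx <;> simpa [Module.Basis.coord_apply, bE_coord] using hx
    rwa [this] at h
  have h1 : volume {x : E2 | x 1 = 0} = 0 := by
    have h := line_null (bE.coord 1) (coord_ne_zero 1) 0
    have : {x : E2 | (bE.coord 1) x = 0} = {x : E2 | x 1 = 0} := by
      ext x; constructor <;> intro hx <;> simpa [Module.Basis.coord_apply, bE_coord] using hx
    rwa [this] at h
  have hd : volume {x : E2 | x 0 + x 1 = 1} = 0 := by
    have h := line_null (bE.coord 0 + bE.coord 1) sum_coord_ne_zero 1
    have : {x : E2 | (bE.coord 0 + bE.coord 1) x = 1} = {x : E2 | x 0 + x 1 = 1} := by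
      ext x
      constructor <;> intro hx <;>
        simpa [LinearMap.add_apply, Module.Basis.coord_apply, bE_coord] using hx
    rwa [this] at h
  have hsub : Tclosed ⊆ Topen ∪ ({x : E2 | x 0 = 0} ∪ {x : E2 | x 1 = 0} ∪ {x : E2 | x 0 + x 1 = 1}) := by
    intro x hx
    obtain ⟨ha, hb, hc⟩ := hx
    by_cases e0 : x 0 = 0
    · exact Or.inr (Or.inl (Or.inl e0))
    by_cases e1 : x 1 = 0
    · exact Or.inr (Or.inl (Or.inr e1))
    by_cases ed : x 0 + x 1 = 1
    · exact Or.inr (Or.inr ed)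
    · exact Or.inl ⟨lt_of_le_of_ne ha (Ne.symm e0), lt_of_le_of_ne hb (Ne.symm e1),
        lt_of_le_of_ne hc ed⟩
  have hle : volume Tclosed ≤ ENNReal.ofReal (1/2) := by
    calc volume Tclosed
        ≤ volume Topen + volume ({x : E2 | x 0 = 0} ∪ {x : E2 | x 1 = 0} ∪ {x : E2 | x 0 + x 1 = 1}) :=
          le_trans (measure_mono hsub) (measure_union_le _ _)
      _ ≤ ENNReal.ofReal (1/2) + 0 := by
          refine add_le_add topen_vol.le ?_
          refine le_trans (measure_union_le _ _) ?_
          rw [hd]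
          refine le_trans (add_le_add (measure_union_le _ _) le_rfl) ?_
          rw [h0, h1]; simp
      _ = ENNReal.ofReal (1/2) := by simp
  have hge : ENNReal.ofReal (1/2) ≤ volume Tclosed := by
    rw [← topen_vol]
    exact measure_mono (fun x hx => ⟨hx.1.le, hx.2.1.le, hx.2.2.le⟩)
  exact le_antisymm hle hge

noncomputable def LL (u v : E2) : E2 →ₗ[ℝ] E2 := bE.constr ℝ ![u, v]

lemma LL0 (u v : E2) : (LL u v) (bE 0) = u := by
  unfold LL; rw [Module.Basis.constr_basis]; simp

lemma LL1 (u v : E2) : (LL u v) (bE 1) = v := by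
  unfold LL; rw [Module.Basis.constr_basis]; simp

lemma LL_det (u v : E2) : LinearMap.det (LL u v) = u 0 * v 1 - v 0 * u 1 := by
  rw [← LinearMap.det_toMatrix bE]
  have h : LinearMap.toMatrix bE bE (LL u v) = Matrix.of ![![u 0, v 0], ![u 1, v 1]] := by
    ext i j
    rw [LinearMap.toMatrix_apply]
    fin_cases j <;> fin_cases i <;> simp [LL0, LL1, bE_coord]
  rw [h, Matrix.det_fin_two]
  simp

noncomputable def ff (A : E2) (u v : E2) : E2 →ᵃ[ℝ] E2 :=
  { toFun := fun x => A + (LL u v) x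
    linear := LL u v
    map_vadd' := by intro p w; simp [map_add]; module }

lemma pilp_add (x y : E2) (i : Fin 2) : (x + y) i = x i + y i := rfl
lemma pilp_smul (r : ℝ) (x : E2) (i : Fin 2) : (r • x) i = r * x i := rfl

lemma convex_tclosed : Convex ℝ Tclosed := by
  intro x hx y hy s t hs ht hst
  obtain ⟨a1,a2,a3⟩ := hx; obtain ⟨b1,b2,b3⟩ := hy
  refine ⟨?_, ?_, ?_⟩ <;> simp only [pilp_add, pilp_smul] <;> nlinarith

lemma hull_sub : convexHull ℝ ({0, bE 0, bE 1} : Set E2) ⊆ Tclosed := by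
  apply convexHull_min _ convex_tclosed
  intro x hx
  rcases hx with rfl | rfl | rfl <;>
    simp only [Tclosed, Set.mem_setOf_eq, bE_apply] <;> norm_num

lemma sub_hull : Topen ⊆ convexHull ℝ ({0, bE 0, bE 1} : Set E2) := by
  intro x hx
  obtain ⟨h1, h2, h3⟩ := hx
  have hxe : x = (1 - x 0 - x 1) • (0:E2) + (x 0) • bE 0 + (x 1) • bE 1 := by
    ext i
    fin_cases i <;> simp [pilp_add, pilp_smul, bE_apply]
  have hmem := (convex_convexHull ℝ ({0, bE 0, bE 1} : Set E2)).sum_mem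
    (t := Finset.univ) (w := ![1 - x 0 - x 1, x 0, x 1]) (z := ![0, bE 0, bE 1])
    (fun i _ => by fin_cases i <;> simp <;> linarith)
    (by simp [Fin.sum_univ_three]; ring)
    (fun i _ => by fin_cases i <;> exact subset_convexHull ℝ _ (by simp))
  rw [hxe]
  simpa [Fin.sum_univ_three] using hmem

lemma stdsimplex_vol : volume (convexHull ℝ ({0, bE 0, bE 1} : Set E2)) = ENNReal.ofReal (1/2) :=
  le_antisymm (tclosed_vol ▸ measure_mono hull_sub) (topen_vol ▸ measure_mono sub_hull)

lemma tri_vol (A B C : E2) :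
    volume (convexHull ℝ ({A, B, C} : Set E2)) =
      ENNReal.ofReal (|(B 0 - A 0) * (C 1 - A 1) - (C 0 - A 0) * (B 1 - A 1)| / 2) := by
  set u := B - A with hu
  set v := C - A with hv
  have himg : ⇑(ff A u v) '' (convexHull ℝ ({0, bE 0, bE 1} : Set E2))
      = convexHull ℝ ({A, B, C} : Set E2) := by
    rw [AffineMap.image_convexHull]
    congr 1
    rw [Set.image_insert_eq, Set.image_insert_eq, Set.image_singleton]
    have h0 : (ff A u v) 0 = A := by simp [ff]
    have h1 : (ff A u v) (bE 0) = B := by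
      show A + (LL u v) (bE 0) = B
      rw [LL0]; rw [hu]; abel
    have h2 : (ff A u v) (bE 1) = C := by
      show A + (LL u v) (bE 1) = C
      rw [LL1]; rw [hv]; abel
    rw [h0, h1, h2]
  rw [← himg]
  have hcomp : ⇑(ff A u v) '' (convexHull ℝ ({0, bE 0, bE 1} : Set E2))
      = (fun x => -A + x) ⁻¹' ((LL u v) '' (convexHull ℝ ({0, bE 0, bE 1} : Set E2))) := by
    ext x
    simp only [Set.mem_image, Set.mem_preimage]
    constructor
    · rintro ⟨y, hy, rfl⟩
      refine ⟨y, hy, ?_⟩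
      show (LL u v) y = -A + (ff A u v) y
      show (LL u v) y = -A + (A + (LL u v) y)
      abel
    · rintro ⟨y, hy, hxy⟩
      refine ⟨y, hy, ?_⟩
      show A + (LL u v) y = x
      rw [hxy]
      abel
  rw [hcomp, measure_preimage_add, Measure.addHaar_image_linearMap, stdsimplex_vol, LL_det]
  rw [← ENNReal.ofReal_mul (abs_nonneg _)]
  congr 1
  show |u 0 * v 1 - v 0 * u 1| * (1/2) = _
  rw [show u 0 = B 0 - A 0 from rfl, show u 1 = B 1 - A 1 from rfl,
    show v 0 = C 0 - A 0 from rfl, show v 1 = C 1 - A 1 from rfl]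
  ring

lemma dist_sq_eq (X Y : E2) (r : ℝ) (h : dist X Y = r * Real.sqrt 3) :
    (X 0 - Y 0)^2 + (X 1 - Y 1)^2 = 3*r^2 := by
  have h1 : (dist X Y)^2 = (X 0 - Y 0)^2 + (X 1 - Y 1)^2 := by
    rw [EuclideanSpace.dist_eq]
    rw [Real.sq_sqrt (by positivity)]
    simp [Fin.sum_univ_two, Real.dist_eq, sq_abs]
  rw [h] at h1
  have h2 : (r * Real.sqrt 3)^2 = 3*r^2 := by
    rw [mul_pow, Real.sq_sqrt (by norm_num : (0:ℝ) ≤ 3)]; ring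
  linarith

lemma msA (x y z : ℕ) : ({x,y,z} : Multiset ℕ) = {y,x,z} := Multiset.cons_swap x y {z}
lemma msB (x y z : ℕ) : ({x,y,z} : Multiset ℕ) = {x,z,y} :=
  congrArg (x ::ₘ ·) (Multiset.cons_swap y z 0)
lemma msC (x y z : ℕ) : ({x,y,z} : Multiset ℕ) = {y,z,x} := by
  rw [msA x y z, msB y x z]
lemma msD (x y z : ℕ) : ({x,y,z} : Multiset ℕ) = {z,x,y} := by
  rw [msB x y z, msA x z y]
lemma msE (x y z : ℕ) : ({x,y,z} : Multiset ℕ) = {z,y,x} := by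
  rw [msA x y z, msB y x z, msA y z x]


lemma nosq (m K : ℕ) (h1 : m*m < K) (h2 : K < (m+1)*(m+1)) (n : ℕ) : n^2 ≠ K := by
  intro h
  rcases le_or_gt n m with h3 | h3
  · have h4 : n*n ≤ m*m := Nat.mul_le_mul h3 h3
    have hnn : n^2 = n*n := sq n
    omega
  · have h4 : (m+1)*(m+1) ≤ n*n := Nat.mul_le_mul h3 h3
    have hnn : n^2 = n*n := sq n
    omega

set_option maxHeartbeats 3000000 in
lemma key (a b c n : ℕ) (ha : 0 < a) (hb : 0 < b) (hc : 0 < c) (hn : 0 < n)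
    (hcb : c ≤ b) (hba : b ≤ a)
    (heron : (n:ℤ)^2 = 3*((a:ℤ)+b+c)*(-(a:ℤ)+b+c)*((a:ℤ)-b+c)*((a:ℤ)+b-c))
    (hineq : n < 4*(a+b+c)) :
    ({a, b, c} : Multiset ℕ) = {3, 3, 3} ∨
    (∃ x y : ℕ, 0 < x ∧ 0 < y ∧ 4 * x^2 = 3 * y^2 + 1 ∧
      ({a, b, c} : Multiset ℕ) = {x, x, 1}) ∨
    (∃ x y : ℕ, 0 < x ∧ 0 < y ∧ x^2 = 3 * y^2 + 1 ∧
      ({a, b, c} : Multiset ℕ) = {x, x, 2}) ∨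
    (∃ x y : ℕ, 0 < x ∧ 0 < y ∧ 4 * x^2 = 15 * y^2 + 1 ∧
      ({a, b, c} : Multiset ℕ) = {3 * x + 1, 3 * x - 1, 3}) := by
  have hvpos : (0:ℤ) < (a:ℤ)-b+c := by omega
  have hwpos : (0:ℤ) < (a:ℤ)+b-c := by omega
  have hupos : (0:ℤ) < -(a:ℤ)+b+c := by
    by_contra h
    push_neg at h
    have h1 : (0:ℤ) < ((a:ℤ)-b+c)*((a:ℤ)+b-c) := mul_pos hvpos hwpos
    have hSpos : (0:ℤ) < (a:ℤ)+b+c := by omega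
    have hpos2 : (0:ℤ) < 3*((a:ℤ)+b+c)*((a:ℤ)-b+c)*((a:ℤ)+b-c) :=
      mul_pos (mul_pos (by linarith) hvpos) hwpos
    have h2 : (3*((a:ℤ)+b+c)*((a:ℤ)-b+c)*((a:ℤ)+b-c)) * (-(a:ℤ)+b+c) ≤ 0 :=
      mul_nonpos_of_nonneg_of_nonpos hpos2.le h
    have h3 : (0:ℤ) < (n:ℤ)^2 := by positivity
    rw [heron] at h3
    nlinarith
  obtain ⟨u, hu⟩ : ∃ u : ℕ, (u:ℤ) = -(a:ℤ)+b+c := ⟨b+c-a, by omega⟩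
  obtain ⟨v, hv⟩ : ∃ v : ℕ, (v:ℤ) = (a:ℤ)-b+c := ⟨a+c-b, by omega⟩
  obtain ⟨w, hw⟩ : ∃ w : ℕ, (w:ℤ) = (a:ℤ)+b-c := ⟨a+b-c, by omega⟩
  have hn2 : n^2 = 3*(u+v+w)*(u*(v*w)) := by
    have hZ : ((n:ℤ))^2 = 3*((u:ℤ)+v+w)*((u:ℤ)*((v:ℤ)*(w:ℤ))) := by
      rw [hu, hv, hw]; linear_combination heron
    exact_mod_cast hZ
  have h2a : v + w = 2*a := by omega
  have h2b : u + w = 2*b := by omega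
  have h2c : u + v = 2*c := by omega
  have hu1 : 1 ≤ u := by omega
  have huv : u ≤ v := by omega
  have hvw : v ≤ w := by omega
  have hineq' : n < 4*(u+v+w) := by omega
  have h16 : 3*(u*(v*w)) < 16*(u+v+w) := by
    refine Nat.lt_of_mul_lt_mul_left (a := u+v+w) ?_
    calc (u+v+w) * (3*(u*(v*w))) = 3*(u+v+w)*(u*(v*w)) := by ring
      _ = n^2 := hn2.symm
      _ = n*n := sq n
      _ < (4*(u+v+w))*(4*(u+v+w)) := Nat.mul_lt_mul_of_lt_of_le hineq' (le_of_lt hineq') (by omega)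
      _ = (u+v+w) * (16*(u+v+w)) := by ring
  have huv15 : u*v ≤ 15 := by
    have hstep : (3*(u*v))*w < 48*w := by
      calc (3*(u*v))*w = 3*(u*(v*w)) := by ring
        _ < 16*(u+v+w) := h16
        _ ≤ 48*w := by omega
    have := Nat.lt_of_mul_lt_mul_right hstep
    omega
  have hu3 : u ≤ 3 := by nlinarith
  have hv15 : v ≤ 15 := by nlinarith
  clear hu hv hw heron hineq hupos hvpos hwpos hineq'
  interval_cases u <;> interval_cases v
  · -- u=1 v=1
    have hc1 : c = 1 := by omega
    have h3n : 3 ∣ n := by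
      refine Nat.Prime.dvd_of_dvd_pow (n := 2) Nat.prime_three ?_
      exact ⟨(1+1+w)*(1*(1*w)), by rw [hn2]; ring⟩
    obtain ⟨t, rfl⟩ := h3n
    have ht2 : 3*t^2 = w^2 + 2*w := by ring_nf at hn2 ⊢; linarith
    have hw1 : 1 ≤ w := by omega
    have ht0 : 0 < t := by
      rcases Nat.eq_zero_or_pos t with rfl | h
      · exfalso; nlinarith
      · exact h
    have h4 : 4*a^2 = (w+1)^2 := by
      have h2a' : 2*a = w+1 := by omega
      calc 4*a^2 = (2*a)^2 := by ring
        _ = (w+1)^2 := by rw [h2a']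
    have h5 : (w+1)^2 = w^2+2*w+1 := by ring
    have hxa : 4*a^2 = 3*t^2 + 1 := by linarith
    have hab : b = a := by omega
    refine Or.inr (Or.inl ⟨a, t, by omega, ht0, hxa, ?_⟩)
    rw [hab, hc1]
  · omega
  · -- u=1 v=3
    exfalso
    have h3n : 3 ∣ n := by
      refine Nat.Prime.dvd_of_dvd_pow (n := 2) Nat.prime_three ?_
      exact ⟨(1+3+w)*(3*w), by rw [hn2]; ring⟩
    obtain ⟨t, rfl⟩ := h3n
    have ht2 : t^2 = w^2 + 4*w := by ring_nf at hn2 ⊢; linarith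
    have hw3 : 3 ≤ w := by omega
    have h1 : w+1 ≤ t := by
      by_contra h
      push_neg at h
      have : t ≤ w := by omega
      nlinarith
    have h2 : t ≤ w+1 := by
      by_contra h
      push_neg at h
      have : w+2 ≤ t := by omega
      nlinarith
    have : t = w+1 := by omega
    subst this
    nlinarith
  · omega
  · -- u=1 v=5
    have hc3 : c = 3 := by omega
    have hw5 : 5 ≤ w := by omega
    have h3n : 3 ∣ n := by
      refine Nat.Prime.dvd_of_dvd_pow (n := 2) Nat.prime_three ?_
      exact ⟨(1+5+w)*(1*(5*w)), by rw [hn2]; ring⟩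
    obtain ⟨s, rfl⟩ := h3n
    have hs2 : 3*s^2 = 5*w^2 + 30*w := by ring_nf at hn2 ⊢; linarith
    have h5s : 5 ∣ s := by
      have hd : 5 ∣ 3*s^2 := ⟨w^2+6*w, by linarith⟩
      have := (Nat.Prime.dvd_mul (by norm_num : Nat.Prime 5)).mp hd
      rcases this with hl | hr
      · norm_num at hl
      · exact Nat.Prime.dvd_of_dvd_pow (by norm_num) hr
    obtain ⟨q, rfl⟩ := h5s
    have hq2 : 15*q^2 = w^2 + 6*w := by ring_nf at hs2 ⊢; linarith
    have h9 : (w+3)^2 = 15*q^2+9 := by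
      have : (w+3)^2 = w^2+6*w+9 := by ring
      linarith
    have h3w : 3 ∣ w+3 := by
      refine Nat.Prime.dvd_of_dvd_pow (n := 2) Nat.prime_three ?_
      exact ⟨5*q^2+3, by rw [h9]; ring⟩
    have h2w : 2 ∣ w+3 := by omega
    have h6 : 6 ∣ w+3 := Nat.Coprime.mul_dvd_of_dvd_of_dvd (by norm_num) h2w h3w
    obtain ⟨x, hx0⟩ := h6
    have hx : w+3 = 6*x := by omega
    have hx2 : 2 ≤ x := by omega
    have h12 : 15*q^2+9 = 36*x^2 := by
      rw [← h9, hx]; ring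
    have h3q : 3 ∣ q := by
      obtain ⟨Q, hQ⟩ : ∃ Q, Q = q^2 := ⟨_, rfl⟩
      obtain ⟨X, hX⟩ : ∃ X, X = x^2 := ⟨_, rfl⟩
      have h12' : 15*Q + 9 = 36*X := by rw [hQ, hX]; linarith
      have hq3 : 3 ∣ 5*Q := by omega
      rw [hQ] at hq3
      have := (Nat.Prime.dvd_mul Nat.prime_three).mp hq3
      rcases this with hl | hr
      · norm_num at hl
      · exact Nat.Prime.dvd_of_dvd_pow Nat.prime_three hr
    obtain ⟨y, rfl⟩ := h3q
    have hfin : 4*x^2 = 15*y^2 + 1 := by ring_nf at h12 ⊢; linarith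
    have hy0 : 0 < y := by
      rcases Nat.eq_zero_or_pos y with rfl | h
      · exfalso; nlinarith
      · exact h
    have ha' : a = 3*x+1 := by omega
    have hb' : b = 3*x-1 := by omega
    refine Or.inr (Or.inr (Or.inr ⟨x, y, by omega, hy0, hfin, ?_⟩))
    rw [ha', hb', hc3]
  · omega
  · -- (1,7)
    have hwub : w ≤ 25 := by omega
    interval_cases w
    · norm_num at hn2
      exact absurd hn2 (nosq 46 2205 (by norm_num) (by norm_num) n)
    · omega
    · norm_num at hn2
      exact absurd hn2 (nosq 56 3213 (by norm_num) (by norm_num) n)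
    · omega
    · norm_num at hn2
      exact absurd hn2 (nosq 66 4389 (by norm_num) (by norm_num) n)
    · omega
    · norm_num at hn2
      exact absurd hn2 (nosq 75 5733 (by norm_num) (by norm_num) n)
    · omega
    · norm_num at hn2
      exact absurd hn2 (nosq 85 7245 (by norm_num) (by norm_num) n)
    · omega
    · norm_num at hn2
      exact absurd hn2 (nosq 94 8925 (by norm_num) (by norm_num) n)
    · omega
    · norm_num at hn2
      exact absurd hn2 (nosq 103 10773 (by norm_num) (by norm_num) n)
    · omega
    · norm_num at hn2
      exact absurd hn2 (nosq 113 12789 (by norm_num) (by norm_num) n)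
    · omega
    · norm_num at hn2
      exact absurd hn2 (nosq 122 14973 (by norm_num) (by norm_num) n)
    · omega
    · norm_num at hn2
      exact absurd hn2 (nosq 131 17325 (by norm_num) (by norm_num) n)
  · omega
  · have hwub : w ≤ 14 := by omega
    interval_cases w
    · norm_num at hn2
      exact absurd hn2 (nosq 67 4617 (by norm_num) (by norm_num) n)
    · omega
    · norm_num at hn2
      exact absurd hn2 (nosq 78 6237 (by norm_num) (by norm_num) n)
    · omega
    · norm_num at hn2
      exact absurd hn2 (nosq 89 8073 (by norm_num) (by norm_num) n)
    · omega
  · omega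
  · have hwub : w ≤ 11 := by omega
    interval_cases w
    · norm_num at hn2
      exact absurd hn2 (nosq 91 8349 (by norm_num) (by norm_num) n)
  · omega
  · omega
  · omega
  · omega
  · -- u=2 v=2
    have hc2 : c = 2 := by omega
    have h2n : 2 ∣ n := by
      refine Nat.Prime.dvd_of_dvd_pow (n := 2) Nat.prime_two ?_
      exact ⟨6*((2+2+w)*w), by rw [hn2]; ring⟩
    obtain ⟨k, rfl⟩ := h2n
    have hk2 : k^2 = 3*w^2 + 12*w := by ring_nf at hn2 ⊢; linarith
    have h3k : 3 ∣ k := by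
      refine Nat.Prime.dvd_of_dvd_pow (n := 2) Nat.prime_three ?_
      exact ⟨w^2+4*w, by rw [hk2]; ring⟩
    obtain ⟨t, rfl⟩ := h3k
    have ht2 : 3*t^2 = w^2 + 4*w := by ring_nf at hk2 ⊢; linarith
    obtain ⟨r, rfl⟩ : ∃ r, w = 2*r := by
      have : 2 ∣ w := by omega
      exact this
    have hr2 : 3*t^2 = 4*r^2 + 8*r := by ring_nf at ht2 ⊢; linarith
    have h2t : 2 ∣ t := by
      have hd : 2 ∣ 3*t^2 := ⟨2*r^2+4*r, by linarith⟩
      have := (Nat.Prime.dvd_mul Nat.prime_two).mp hd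
      rcases this with hl | hr
      · norm_num at hl
      · exact Nat.Prime.dvd_of_dvd_pow Nat.prime_two hr
    obtain ⟨s, rfl⟩ := h2t
    have hs2 : 3*s^2 = r^2 + 2*r := by ring_nf at hr2 ⊢; linarith
    have hr1 : 1 ≤ r := by omega
    have hs0 : 0 < s := by
      rcases Nat.eq_zero_or_pos s with rfl | h
      · exfalso; nlinarith
      · exact h
    have h4 : a^2 = (r+1)^2 := by
      have h2a' : a = r+1 := by omega
      rw [h2a']
    have h5 : (r+1)^2 = r^2+2*r+1 := by ring
    have hxa : a^2 = 3*s^2 + 1 := by linarith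
    have hab : b = a := by omega
    refine Or.inr (Or.inr (Or.inl ⟨a, s, by omega, hs0, hxa, ?_⟩))
    rw [hab, hc2]
  · omega
  · have hwub : w ≤ 11 := by omega
    interval_cases w
    · norm_num at hn2
      exact absurd hn2 (nosq 30 960 (by norm_num) (by norm_num) n)
    · omega
    · norm_num at hn2
      exact absurd hn2 (nosq 41 1728 (by norm_num) (by norm_num) n)
    · omega
    · norm_num at hn2
      exact absurd hn2 (nosq 51 2688 (by norm_num) (by norm_num) n)
    · omega
    · norm_num at hn2
      exact absurd hn2 (nosq 61 3840 (by norm_num) (by norm_num) n)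
    · omega
  · omega
  · have hwub : w ≤ 6 := by omega
    interval_cases w
    · norm_num at hn2
      exact absurd hn2 (nosq 54 3024 (by norm_num) (by norm_num) n)
  · omega
  · omega
  · omega
  · omega
  · omega
  · omega
  · omega
  · omega
  · omega
  · -- u=3 v=3
    have hwub : w ≤ 8 := by omega
    interval_cases w
    · -- w=3
      have ha3 : a = 3 := by omega
      have hb3 : b = 3 := by omega
      have hc3 : c = 3 := by omega
      refine Or.inl ?_
      rw [ha3, hb3, hc3]
    · omega
    · norm_num at hn2
      exact absurd hn2 (nosq 38 1485 (by norm_num) (by norm_num) n)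
    · omega
    · norm_num at hn2
      exact absurd hn2 (nosq 49 2457 (by norm_num) (by norm_num) n)
    · omega
  · omega
  · omega
  · omega
  · omega
  · omega
  · omega
  · omega
  · omega
  · omega
  · omega
  · omega
  · omega


theorem perimeter_dominant_classification_euclidean
    (A B C : EuclideanSpace ℝ (Fin 2))
    (hind : AffineIndependent ℝ ![A, B, C])
    (a b c n : ℕ) (ha : 0 < a) (hb : 0 < b) (hc : 0 < c) (hn : 0 < n)
    (hAB : dist A B = c * Real.sqrt 3)
    (hBC : dist B C = a * Real.sqrt 3)
    (hCA : dist C A = b * Real.sqrt 3)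
    (harea : volume (convexHull ℝ ({A, B, C} : Set (EuclideanSpace ℝ (Fin 2)))) =
      ENNReal.ofReal (n * Real.sqrt 3 / 4))
    (hdom : n * Real.sqrt 3 / 4 < dist A B + dist B C + dist C A) :
    ({a, b, c} : Multiset ℕ) = {3, 3, 3} ∨
    (∃ x y : ℕ, 0 < x ∧ 0 < y ∧ 4 * x^2 = 3 * y^2 + 1 ∧
      ({a, b, c} : Multiset ℕ) = {x, x, 1}) ∨
    (∃ x y : ℕ, 0 < x ∧ 0 < y ∧ x^2 = 3 * y^2 + 1 ∧
      ({a, b, c} : Multiset ℕ) = {x, x, 2}) ∨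
    (∃ x y : ℕ, 0 < x ∧ 0 < y ∧ 4 * x^2 = 15 * y^2 + 1 ∧
      ({a, b, c} : Multiset ℕ) = {3 * x + 1, 3 * x - 1, 3}) := by
  rw [tri_vol] at harea
  set d : ℝ := (B 0 - A 0) * (C 1 - A 1) - (C 0 - A 0) * (B 1 - A 1) with hdDef
  rw [ENNReal.ofReal_eq_ofReal_iff (by positivity) (by positivity)] at harea
  have hs3 : (0:ℝ) < Real.sqrt 3 := Real.sqrt_pos.mpr (by norm_num)
  -- Heron over the reals
  have hd2 : d^2 = 3*(n:ℝ)^2/4 := by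
    have h1 : |d| = (n:ℝ) * Real.sqrt 3 / 2 := by linarith
    calc d^2 = |d|^2 := (sq_abs d).symm
      _ = ((n:ℝ) * Real.sqrt 3 / 2)^2 := by rw [h1]
      _ = (n:ℝ)^2 * (Real.sqrt 3)^2 / 4 := by ring
      _ = 3*(n:ℝ)^2/4 := by rw [Real.sq_sqrt (by norm_num : (0:ℝ) ≤ 3)]; ring
  have hp : (B 0 - A 0)^2 + (B 1 - A 1)^2 = 3*(c:ℝ)^2 :=
    dist_sq_eq B A c (by rw [dist_comm]; exact hAB)
  have hq : (C 0 - A 0)^2 + (C 1 - A 1)^2 = 3*(b:ℝ)^2 :=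
    dist_sq_eq C A b hCA
  have hr : (B 0 - C 0)^2 + (B 1 - C 1)^2 = 3*(a:ℝ)^2 :=
    dist_sq_eq B C a hBC
  have hdot : (B 0 - A 0)*(C 0 - A 0) + (B 1 - A 1)*(C 1 - A 1)
      = (3*(c:ℝ)^2 + 3*(b:ℝ)^2 - 3*(a:ℝ)^2)/2 := by
    linear_combination hp/2 + hq/2 - hr/2
  have hlag : d^2 = ((B 0 - A 0)^2 + (B 1 - A 1)^2) * ((C 0 - A 0)^2 + (C 1 - A 1)^2)
      - ((B 0 - A 0)*(C 0 - A 0) + (B 1 - A 1)*(C 1 - A 1))^2 := by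
    rw [hdDef]; ring
  have h5 : 3*(n:ℝ)^2/4 = 3*(c:ℝ)^2 * (3*(b:ℝ)^2) - ((3*(c:ℝ)^2 + 3*(b:ℝ)^2 - 3*(a:ℝ)^2)/2)^2 := by
    rw [← hd2, hlag, hp, hq, hdot]
  have heronR : (n:ℝ)^2 = 3*((a:ℝ)+b+c)*(-(a:ℝ)+b+c)*((a:ℝ)-b+c)*((a:ℝ)+b-c) := by
    linear_combination (4/3) * h5
  have heronZ : (n:ℤ)^2 = 3*((a:ℤ)+b+c)*(-(a:ℤ)+b+c)*((a:ℤ)-b+c)*((a:ℤ)+b-c) := by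
    have := heronR
    exact_mod_cast this
  -- the perimeter inequality
  have hineqN : n < 4*(a+b+c) := by
    rw [hAB, hBC, hCA] at hdom
    have key2 : ((n:ℝ)/4) * Real.sqrt 3 < ((c:ℝ)+a+b) * Real.sqrt 3 := by
      ring_nf
      ring_nf at hdom
      linarith
    have h6 : (n:ℝ)/4 < (c:ℝ)+a+b := lt_of_mul_lt_mul_right key2 hs3.le
    have h7 : (n:ℝ) < 4*((a:ℝ)+b+c) := by linarith
    exact_mod_cast h7
  rcases le_total a b with h1 | h1 <;> rcases le_total b c with h2 | h2 <;>
    rcases le_total a c with h3 | h3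
  · rw [msE a b c]
    exact key c b a n hc hb ha hn h1 h2 (by linear_combination heronZ) (by omega)
  · rw [msE a b c]
    exact key c b a n hc hb ha hn h1 h2 (by linear_combination heronZ) (by omega)
  · rw [msC a b c]
    exact key b c a n hb hc ha hn h3 h2 (by linear_combination heronZ) (by omega)
  · rw [msA a b c]
    exact key b a c n hb ha hc hn h3 h1 (by linear_combination heronZ) (by omega)
  · rw [msD a b c]
    exact key c a b n hc ha hb hn h1 h3 (by linear_combination heronZ) (by omega)
  · rw [msB a b c]
    exact key a c b n ha hc hb hn h2 h3 (by linear_combination heronZ) (by omega)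
  · exact key a b c n ha hb hc hn h2 h1 (by linear_combination heronZ) (by omega)
  · exact key a b c n ha hb hc hn h2 h1 (by linear_combination heronZ) (by omega)
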